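/- The inclusion of the space of strictly increasing directed paths from 0 to k+1 avoiding the forbidden set Y into the space of nondecreasing directed paths from 0 to k+1 avoiding Y is a homotopy equivalence, where Y is the union, over F in an upward-closed family F of subsets of [n], of the sets {x ∈ ℝⁿ : x_i ∈ ℤ for all i ∈ F}, and 'avoiding' means the open interior of the path (i.e., p(t) for 0 < t < 1) lies in ℝⁿ \ Y. -/

import Mathlib

set_option maxHeartbeats 1000000

open unitInterval

/-- Directed (nondecreasing) paths from `0` to `k+1` whose interior avoids `Y_𝓕`. -/
def DiPath (n : ℕ) (k : Fin n → ℕ) (𝓕 : Finset (Finset (Fin n)))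
    (p : C(I, Fin n → ℝ)) : Prop :=
  (∀ i : Fin n, Monotone fun t : I => p t i) ∧
    (∀ i : Fin n, p 0 i = 0) ∧ (∀ i : Fin n, p 1 i = (k i : ℝ) + 1) ∧
    ∀ t : I, 0 < (t : ℝ) → (t : ℝ) < 1 →
      ¬ ∃ F ∈ 𝓕, ∀ i ∈ F, ∃ z : ℤ, p t i = (z : ℝ)

/-- Strictly increasing such paths. -/
def DiPathStrict (n : ℕ) (k : Fin n → ℕ) (𝓕 : Finset (Finset (Fin n)))
    (p : C(I, Fin n → ℝ)) : Prop :=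
  (∀ i : Fin n, StrictMono fun t : I => p t i) ∧
    (∀ i : Fin n, p 0 i = 0) ∧ (∀ i : Fin n, p 1 i = (k i : ℝ) + 1) ∧
    ∀ t : I, 0 < (t : ℝ) → (t : ℝ) < 1 →
      ¬ ∃ F ∈ 𝓕, ∀ i ∈ F, ∃ z : ℤ, p t i = (z : ℝ)

open Topology

namespace Stmt5Aux

variable {n : ℕ}

/-- the tilt mix, as a raw function, with `max v 0` to keep it globally continuous. -/
noncomputable def mixFun (k : Fin n → ℕ) : (C(I, Fin n → ℝ) × ℝ) × I → Fin n → ℝ :=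
  fun q i => (((k i : ℝ) + 1) / (((k i : ℝ) + 1) + max q.1.2 0)) *
    (q.1.1 q.2 i + max q.1.2 0 * (q.2 : ℝ))

lemma continuous_mixFun (k : Fin n → ℕ) : Continuous (mixFun k) := by
  apply continuous_pi
  intro i
  have hden : ∀ q : (C(I, Fin n → ℝ) × ℝ) × I, (((k i : ℝ) + 1) + max q.1.2 0) ≠ 0 := by
    intro q
    have h1 : (0:ℝ) ≤ max q.1.2 0 := le_max_right _ _
    have h2 : (0:ℝ) < (k i : ℝ) + 1 := by positivity
    linarith
  have hmax : Continuous fun q : (C(I, Fin n → ℝ) × ℝ) × I => max q.1.2 0 :=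
    (continuous_fst.snd).max continuous_const
  have heval : Continuous fun q : (C(I, Fin n → ℝ) × ℝ) × I => q.1.1 q.2 i := by
    have h : Continuous fun q : (C(I, Fin n → ℝ) × ℝ) × I => (q.1.1, q.2) :=
      (continuous_fst.fst).prodMk continuous_snd
    exact (continuous_apply i).comp (continuous_eval.comp h)
  have hcoe : Continuous fun q : (C(I, Fin n → ℝ) × ℝ) × I => (q.2 : ℝ) :=
    continuous_subtype_val.comp continuous_snd
  exact ((continuous_const.div (continuous_const.add hmax) hden)).mul
    (heval.add (hmax.mul hcoe))

/-- the tilt mix as a continuous map on `I`. -/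
noncomputable def mix (k : Fin n → ℕ) (p : C(I, Fin n → ℝ)) (v : ℝ) : C(I, Fin n → ℝ) :=
  ⟨fun t => mixFun k ((p, v), t),
    (continuous_mixFun k).comp ((continuous_const.prodMk continuous_id))⟩

lemma mix_apply (k : Fin n → ℕ) (p : C(I, Fin n → ℝ)) (v : ℝ) (t : I) (i : Fin n) :
    mix k p v t i = (((k i : ℝ) + 1) / (((k i : ℝ) + 1) + max v 0)) *
      (p t i + max v 0 * (t : ℝ)) := rfl

lemma mix_eq_self (k : Fin n → ℕ) (p : C(I, Fin n → ℝ)) {v : ℝ} (hv : v ≤ 0) :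
    mix k p v = p := by
  ext t i
  rw [mix_apply, max_eq_right hv]
  have h2 : ((k i : ℝ) + 1) ≠ 0 := by positivity
  field_simp
  ring

lemma coeff_pos (k : Fin n → ℕ) (v : ℝ) (i : Fin n) :
    0 < ((k i : ℝ) + 1) / (((k i : ℝ) + 1) + max v 0) := by
  have h1 : (0:ℝ) ≤ max v 0 := le_max_right _ _
  have h2 : (0:ℝ) < (k i : ℝ) + 1 := by positivity
  positivity

lemma coeff_le_one (k : Fin n → ℕ) (v : ℝ) (i : Fin n) :
    ((k i : ℝ) + 1) / (((k i : ℝ) + 1) + max v 0) ≤ 1 := by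
  have h1 : (0:ℝ) ≤ max v 0 := le_max_right _ _
  have h2 : (0:ℝ) < (k i : ℝ) + 1 := by positivity
  rw [div_le_one (by linarith)]
  linarith

lemma mix_monotone (k : Fin n → ℕ) (p : C(I, Fin n → ℝ)) (v : ℝ)
    (hp : ∀ i, Monotone fun t : I => p t i) (i : Fin n) :
    Monotone fun t : I => mix k p v t i := by
  intro t₁ t₂ h
  have h1 : (0:ℝ) ≤ max v 0 := le_max_right _ _
  have h2 : p t₁ i ≤ p t₂ i := hp i h
  have h3 : (t₁ : ℝ) ≤ (t₂ : ℝ) := h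
  simp only [mix_apply]
  have := coeff_pos k v i
  have : max v 0 * (t₁ : ℝ) ≤ max v 0 * (t₂ : ℝ) := by nlinarith
  nlinarith [coeff_pos k v i]

lemma mix_strictMono (k : Fin n → ℕ) (p : C(I, Fin n → ℝ)) {v : ℝ} (hv : 0 < v)
    (hp : ∀ i, Monotone fun t : I => p t i) (i : Fin n) :
    StrictMono fun t : I => mix k p v t i := by
  intro t₁ t₂ h
  have hm : max v 0 = v := max_eq_left hv.le
  have h2 : p t₁ i ≤ p t₂ i := hp i h.le
  have h3 : (t₁ : ℝ) < (t₂ : ℝ) := h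
  simp only [mix_apply, hm]
  have hc := coeff_pos k v i
  rw [max_eq_left hv.le] at hc
  have : v * (t₁ : ℝ) < v * (t₂ : ℝ) := by nlinarith
  nlinarith

lemma mix_strictMono_of_strict (k : Fin n → ℕ) (p : C(I, Fin n → ℝ)) (v : ℝ)
    (hp : ∀ i, StrictMono fun t : I => p t i) (i : Fin n) :
    StrictMono fun t : I => mix k p v t i := by
  intro t₁ t₂ h
  have h1 : (0:ℝ) ≤ max v 0 := le_max_right _ _
  have h2 : p t₁ i < p t₂ i := hp i h
  have h3 : (t₁ : ℝ) ≤ (t₂ : ℝ) := h.le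
  simp only [mix_apply]
  have hc := coeff_pos k v i
  have : max v 0 * (t₁ : ℝ) ≤ max v 0 * (t₂ : ℝ) := by nlinarith
  nlinarith

lemma mix_zero_apply (k : Fin n → ℕ) (p : C(I, Fin n → ℝ)) (v : ℝ)
    (h0 : ∀ i, p 0 i = 0) (i : Fin n) : mix k p v 0 i = 0 := by
  rw [mix_apply, h0]
  norm_num

lemma mix_one_apply (k : Fin n → ℕ) (p : C(I, Fin n → ℝ)) (v : ℝ)
    (h1 : ∀ i, p 1 i = (k i : ℝ) + 1) (i : Fin n) : mix k p v 1 i = (k i : ℝ) + 1 := by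
  rw [mix_apply, h1]
  have hm : (0:ℝ) ≤ max v 0 := le_max_right _ _
  have h2 : (0:ℝ) < (k i : ℝ) + 1 := by positivity
  have h3 : ((k i : ℝ) + 1) + max v 0 ≠ 0 := by linarith
  have ht1 : ((1:I):ℝ) = 1 := rfl
  rw [ht1]
  field_simp

/-- The forbidden-pattern predicate. -/
def Bad (𝓕 : Finset (Finset (Fin n))) (x : Fin n → ℝ) : Prop :=
  ∃ F ∈ 𝓕, ∀ i ∈ F, ∃ z : ℤ, x i = (z : ℝ)

lemma isClosed_bad (𝓕 : Finset (Finset (Fin n))) : IsClosed {x : Fin n → ℝ | Bad 𝓕 x} := by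
  have he : {x : Fin n → ℝ | Bad 𝓕 x} =
      ⋃ F ∈ 𝓕, ⋂ i ∈ F, (fun x : Fin n → ℝ => x i) ⁻¹' (Set.range ((↑) : ℤ → ℝ)) := by
    ext x
    simp only [Set.mem_setOf_eq, Set.mem_iUnion, Set.mem_iInter, Set.mem_preimage,
      Set.mem_range, Bad]
    constructor
    · rintro ⟨F, hF, h⟩
      exact ⟨F, hF, fun i hi => by obtain ⟨z, hz⟩ := h i hi; exact ⟨z, hz.symm⟩⟩
    · rintro ⟨F, hF, h⟩
      exact ⟨F, hF, fun i hi => by obtain ⟨z, hz⟩ := h i hi; exact ⟨z, hz.symm⟩⟩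
  rw [he]
  refine (𝓕.finite_toSet).isClosed_biUnion fun F _ => ?_
  exact isClosed_biInter fun i _ =>
    (Int.isClosedEmbedding_coe_real.isClosed_range).preimage (continuous_apply i)

/-- `v` is a good tilt bound for `p`: every positive tilt `w ≤ v` avoids the pattern. -/
def good (k : Fin n → ℕ) (𝓕 : Finset (Finset (Fin n))) (p : C(I, Fin n → ℝ)) (v : ℝ) : Prop :=
  ∀ w : ℝ, 0 < w → w ≤ v → ∀ t : I, 0 < (t : ℝ) → (t : ℝ) < 1 → ¬ Bad 𝓕 (mix k p w t)

def TS (k : Fin n → ℕ) (𝓕 : Finset (Finset (Fin n))) (p : C(I, Fin n → ℝ)) : Set ℝ :=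
  {v | 0 < v ∧ v ≤ 1 ∧ good k 𝓕 p v}

lemma convex_TS (k : Fin n → ℕ) (𝓕 : Finset (Finset (Fin n))) (p : C(I, Fin n → ℝ)) :
    Convex ℝ (TS k 𝓕 p) := by
  intro a ha b hb s t hs ht hst
  simp only [smul_eq_mul]
  have h1 : 0 < s * a + t * b := by
    have hmin : 0 < min a b := lt_min ha.1 hb.1
    have h1a := mul_le_mul_of_nonneg_left (min_le_left a b) hs
    have h1b := mul_le_mul_of_nonneg_left (min_le_right a b) ht
    nlinarith
  have h2 : s * a + t * b ≤ 1 := by nlinarith [ha.2.1, hb.2.1]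
  refine ⟨h1, h2, ?_⟩
  rcases le_total a b with hab | hab
  · have hle : s * a + t * b ≤ b := by nlinarith
    exact fun w hw0 hwle => hb.2.2 w hw0 (hwle.trans hle)
  · have hle : s * a + t * b ≤ a := by nlinarith
    exact fun w hw0 hwle => ha.2.2 w hw0 (hwle.trans hle)

/-- Local goodness: a single small tilt bound works on a whole ball around `p₀`. -/
lemma local_good (k : Fin n → ℕ) (𝓕 : Finset (Finset (Fin n)))
    (hcard : ∀ F ∈ 𝓕, 2 ≤ F.card)
    (p₀ : C(I, Fin n → ℝ)) (hp₀ : DiPath n k 𝓕 p₀) :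
    ∃ c : ℝ, ∃ r : ℝ, 0 < r ∧ ∀ p : C(I, Fin n → ℝ), dist p p₀ < r →
      DiPath n k 𝓕 p → c ∈ TS k 𝓕 p := by
  obtain ⟨hmono, h0, h1e, havoid⟩ := hp₀
  have c0 : ContinuousAt p₀ 0 := p₀.continuous.continuousAt
  rw [Metric.continuousAt_iff] at c0
  obtain ⟨δ₁, hδ₁, hmarg0⟩ := c0 (1/4) (by norm_num)
  have c1 : ContinuousAt p₀ 1 := p₀.continuous.continuousAt
  rw [Metric.continuousAt_iff] at c1
  obtain ⟨δ₂, hδ₂, hmarg1⟩ := c1 (1/4) (by norm_num)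
  obtain ⟨δ, hδpos, hδ14, hδδ₁, hδδ₂⟩ : ∃ d : ℝ, 0 < d ∧ d ≤ 1/4 ∧ d < δ₁ ∧ d < δ₂ :=
    ⟨min (1/4) (min (δ₁/2) (δ₂/2)),
      lt_min (by norm_num) (lt_min (by positivity) (by positivity)),
      min_le_left _ _,
      lt_of_le_of_lt ((min_le_right _ _).trans (min_le_left _ _)) (by linarith),
      lt_of_le_of_lt ((min_le_right _ _).trans (min_le_right _ _)) (by linarith)⟩
  -- margins
  have marg0 : ∀ t : I, (t : ℝ) ≤ δ → ∀ i, p₀ t i < 1/4 := by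
    intro t ht i
    have hd : dist t (0 : I) < δ₁ := by
      rw [Subtype.dist_eq]
      have h00 : ((0 : I) : ℝ) = 0 := rfl
      rw [h00, Real.dist_eq, sub_zero, abs_of_nonneg t.2.1]
      linarith
    have hdd := hmarg0 hd
    have h₁ := dist_le_pi_dist (p₀ t) (p₀ 0) i
    have h₂ := lt_of_le_of_lt h₁ hdd
    rw [Real.dist_eq, h0 i, sub_zero] at h₂
    exact lt_of_le_of_lt (le_abs_self _) h₂
  have marg1 : ∀ t : I, 1 - δ ≤ (t : ℝ) → ∀ i, (k i : ℝ) + 1 - 1/4 < p₀ t i := by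
    intro t ht i
    have hd : dist t (1 : I) < δ₂ := by
      rw [Subtype.dist_eq]
      have h11 : ((1 : I) : ℝ) = 1 := rfl
      rw [h11, Real.dist_eq, abs_of_nonpos (by linarith [t.2.2])]
      linarith [t.2.2]
    have hdd := hmarg1 hd
    have h₁ := dist_le_pi_dist (p₀ t) (p₀ 1) i
    have h₂ := lt_of_le_of_lt h₁ hdd
    rw [Real.dist_eq, h1e i] at h₂
    have := abs_lt.mp h₂
    linarith [this.1]
  -- the compact middle
  set Smid : Set I := {t : I | δ ≤ (t : ℝ) ∧ (t : ℝ) ≤ 1 - δ} with hSmiddef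
  have hSclosed : IsClosed Smid := by
    have : Smid = (fun t : I => (t : ℝ)) ⁻¹' (Set.Icc δ (1 - δ)) := rfl
    rw [this]
    exact isClosed_Icc.preimage continuous_subtype_val
  have hSc : IsCompact Smid := hSclosed.isCompact
  set Ω : Set ((C(I, Fin n → ℝ) × ℝ) × I) := (mixFun k) ⁻¹' {x | Bad 𝓕 x}ᶜ with hΩdef
  have hΩ : IsOpen Ω := (isClosed_bad 𝓕).isOpen_compl.preimage (continuous_mixFun k)
  have hsub : ({((p₀, (0:ℝ)))} ×ˢ Smid) ⊆ Ω := by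
    rintro ⟨pv, t⟩ ⟨hpv, ht⟩
    simp only [Set.mem_singleton_iff] at hpv
    subst hpv
    have heq : mixFun k ((p₀, (0:ℝ)), t) = p₀ t := by
      funext i
      show (((k i : ℝ) + 1) / (((k i : ℝ) + 1) + max (0:ℝ) 0)) *
        (p₀ t i + max (0:ℝ) 0 * (t : ℝ)) = _
      have : ((k i : ℝ) + 1) ≠ 0 := by positivity
      field_simp
      rw [max_self]
      ring
    simp only [hΩdef, Set.mem_preimage, heq, Set.mem_compl_iff, Set.mem_setOf_eq]
    exact havoid t (lt_of_lt_of_le hδpos ht.1) (by linarith [ht.2])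
  obtain ⟨U, V, hUo, hVo, hUmem, hVmem, hUV⟩ :=
    generalized_tube_lemma isCompact_singleton hSc hΩ hsub
  have hUnhds : U ∈ 𝓝 ((p₀, (0:ℝ))) := hUo.mem_nhds (hUmem rfl)
  obtain ⟨ε, hε, hball⟩ := Metric.mem_nhds_iff.mp hUnhds
  refine ⟨min (ε/2) 1, min (ε/2) (1/4), by positivity, ?_⟩
  intro p hdist hpPath
  obtain ⟨pm, p0e, p1e, pav⟩ := hpPath
  refine ⟨by positivity, min_le_right _ _, ?_⟩
  intro w hw0 hwle t ht0 ht1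
  have hw1 : w ≤ 1 := hwle.trans (min_le_right _ _)
  have hwε : w < ε := lt_of_le_of_lt (hwle.trans (min_le_left _ _)) (by linarith)
  have hmaxw : max w 0 = w := max_eq_left hw0.le
  have hclose : ∀ (s : I) (i : Fin n), |p s i - p₀ s i| < 1/4 := by
    intro s i
    have h₁ := dist_le_pi_dist (p s) (p₀ s) i
    have h₂ := ContinuousMap.dist_apply_le_dist (f := p) (g := p₀) s
    have h₃ := lt_of_le_of_lt (le_trans h₁ h₂) (lt_of_lt_of_le hdist (min_le_right _ _))
    rwa [Real.dist_eq] at h₃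
  intro hbad
  obtain ⟨F, hF, hint⟩ := hbad
  have hKpos : ∀ i : Fin n, (0:ℝ) < (k i : ℝ) + 1 := fun i => by positivity
  rcases le_or_gt (t : ℝ) δ with hcase | hcase
  · -- near 0 : all coordinates in (0,1)
    obtain ⟨i, hi⟩ := Finset.card_pos.mp (lt_of_lt_of_le (by norm_num) (hcard F hF))
    obtain ⟨z, hz⟩ := hint i hi
    have hval := mix_apply k p w t i
    rw [hmaxw] at hval
    set K : ℝ := (k i : ℝ) + 1 with hKdef
    set C : ℝ := K / (K + w) with hCdef
    have hCpos : 0 < C := by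
      have := hKpos i
      positivity
    have hCle : C ≤ 1 := by
      have := hKpos i
      rw [hCdef, div_le_one (by linarith)]
      linarith
    have hpge : 0 ≤ p t i := by
      have h01 : (0:I) ≤ t := Subtype.coe_le_coe.mp t.2.1
      have := pm i h01
      simpa [p0e i] using this
    have hplt : p t i < 1/2 := by
      have := hclose t i
      have h2 := marg0 t hcase i
      have := abs_lt.mp this
      linarith
    have hwt : w * (t : ℝ) ≤ δ := by
      calc w * (t : ℝ) ≤ 1 * (t : ℝ) := by nlinarith [t.2.1]
      _ = (t : ℝ) := one_mul _
      _ ≤ δ := hcase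
    have hlow : 0 < mix k p w t i := by
      rw [hval]
      have : 0 < w * (t : ℝ) := mul_pos hw0 ht0
      nlinarith
    have hhigh : mix k p w t i < 1 := by
      rw [hval]
      have hsum : p t i + w * (t : ℝ) < 3/4 := by linarith
      nlinarith
    rw [hz] at hlow hhigh
    have hz0 : (0:ℤ) < z := by exact_mod_cast hlow
    have hz1 : z < (1:ℤ) := by exact_mod_cast hhigh
    omega
  rcases le_or_gt (1 - δ) (t : ℝ) with hcase2 | hcase2
  · -- near 1 : coordinate i in (k i, k i + 1)
    obtain ⟨i, hi⟩ := Finset.card_pos.mp (lt_of_lt_of_le (by norm_num) (hcard F hF))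
    obtain ⟨z, hz⟩ := hint i hi
    have hval := mix_apply k p w t i
    rw [hmaxw] at hval
    set K : ℝ := (k i : ℝ) + 1 with hKdef
    have hK1 : (1:ℝ) ≤ K := by
      have : (0:ℝ) ≤ (k i : ℝ) := Nat.cast_nonneg _
      linarith
    have hple : p t i ≤ K := by
      have h1t : t ≤ (1:I) := Subtype.coe_le_coe.mp t.2.2
      have := pm i h1t
      simpa [p1e i] using this
    have hpgt : K - 1/2 < p t i := by
      have := hclose t i
      have h2 := marg1 t hcase2 i
      have := abs_lt.mp this
      simp only [hKdef] at *
      linarith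
    have hdenpos : (0:ℝ) < K + w := by linarith
    have hK0 : (0:ℝ) < K := by linarith
    have hhigh : mix k p w t i < K := by
      rw [hval, div_mul_eq_mul_div, div_lt_iff₀ hdenpos]
      have h1 : w * (t:ℝ) < w := mul_lt_of_lt_one_right hw0 ht1
      have hsum : p t i + w * (t:ℝ) < K + w := by linarith
      exact mul_lt_mul_of_pos_left hsum hK0
    have hlow : K - 1 < mix k p w t i := by
      rw [hval, div_mul_eq_mul_div, lt_div_iff₀ hdenpos]
      have h1 : w * (1 - δ) ≤ w * (t:ℝ) := mul_le_mul_of_nonneg_left hcase2 hw0.le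
      have h2 : K - 1/2 + w * (1-δ) < p t i + w * (t:ℝ) := by linarith
      have h3 : K * (K - 1/2 + w * (1-δ)) < K * (p t i + w * (t:ℝ)) :=
        mul_lt_mul_of_pos_left h2 hK0
      have h4a : w * δ ≤ δ := mul_le_of_le_one_left hδpos.le hw1
      have h4b : K * (w * δ) ≤ K * δ := mul_le_mul_of_nonneg_left h4a hK0.le
      have h4c : K * δ ≤ K * (1/4) := mul_le_mul_of_nonneg_left hδ14 hK0.le
      nlinarith [h3, h4b, h4c]
    rw [hz] at hlow hhigh
    have hzk1 : (z:ℝ) < (k i : ℝ) + 1 := hhigh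
    have hzk2 : (k i : ℝ) < (z:ℝ) := by simp only [hKdef] at hlow; linarith
    have hz1 : z < ((k i : ℤ) + 1) := by exact_mod_cast hzk1
    have hz2 : ((k i : ℤ)) < z := by exact_mod_cast hzk2
    omega
  · -- middle : use the tube
    have hmem : ((p, w), t) ∈ U ×ˢ V := by
      constructor
      · apply hball
        rw [Metric.mem_ball, Prod.dist_eq]
        apply max_lt
        · exact lt_of_lt_of_le hdist ((min_le_left _ _).trans (by linarith))
        · rw [Real.dist_eq, sub_zero, abs_of_pos hw0]; exact hwε
      · exact hVmem ⟨hcase.le, hcase2.le⟩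
    have := hUV hmem
    simp only [hΩdef, Set.mem_preimage, Set.mem_compl_iff, Set.mem_setOf_eq] at this
    exact this ⟨F, hF, hint⟩

lemma diPath_mix (k : Fin n → ℕ) (𝓕 : Finset (Finset (Fin n))) {p : C(I, Fin n → ℝ)}
    (hp : DiPath n k 𝓕 p) {v u : ℝ} (hv0 : 0 ≤ v) (hvu : v ≤ u) (hu : u ∈ TS k 𝓕 p) :
    DiPath n k 𝓕 (mix k p v) := by
  obtain ⟨hm, h0, h1, hav⟩ := hp
  refine ⟨fun i => mix_monotone k p v hm i, fun i => mix_zero_apply k p v h0 i,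
    fun i => mix_one_apply k p v h1 i, ?_⟩
  intro t ht0 ht1 hbad
  rcases eq_or_lt_of_le hv0 with he | hlt
  · rw [mix_eq_self k p (le_of_eq he.symm)] at hbad
    exact hav t ht0 ht1 hbad
  · exact hu.2.2 v hlt hvu t ht0 ht1 hbad

lemma diPathStrict_mix_pos (k : Fin n → ℕ) (𝓕 : Finset (Finset (Fin n)))
    {p : C(I, Fin n → ℝ)} (hp : DiPath n k 𝓕 p) {v u : ℝ} (hv0 : 0 < v) (hvu : v ≤ u)
    (hu : u ∈ TS k 𝓕 p) : DiPathStrict n k 𝓕 (mix k p v) := by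
  obtain ⟨hm, h0, h1, hav⟩ := hp
  exact ⟨fun i => mix_strictMono k p hv0 hm i, fun i => mix_zero_apply k p v h0 i,
    fun i => mix_one_apply k p v h1 i,
    fun t ht0 ht1 hbad => hu.2.2 v hv0 hvu t ht0 ht1 hbad⟩

lemma diPathStrict_mix_of_strict (k : Fin n → ℕ) (𝓕 : Finset (Finset (Fin n)))
    {p : C(I, Fin n → ℝ)} (hp : DiPathStrict n k 𝓕 p) {v u : ℝ} (hv0 : 0 ≤ v) (hvu : v ≤ u)
    (hu : u ∈ TS k 𝓕 p) : DiPathStrict n k 𝓕 (mix k p v) := by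
  obtain ⟨hm, h0, h1, hav⟩ := hp
  refine ⟨fun i => mix_strictMono_of_strict k p v hm i, fun i => mix_zero_apply k p v h0 i,
    fun i => mix_one_apply k p v h1 i, ?_⟩
  intro t ht0 ht1 hbad
  rcases eq_or_lt_of_le hv0 with he | hlt
  · rw [mix_eq_self k p (le_of_eq he.symm)] at hbad
    exact hav t ht0 ht1 hbad
  · exact hu.2.2 v hlt hvu t ht0 ht1 hbad

end Stmt5Aux

/-- Lemma 2.3 of Meshulam–Raussen: the inclusion of the space of strictly increasing
directed paths from `0` to `k+1` avoiding `Y_𝓕` into the space of nondecreasing such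
paths is a homotopy equivalence (both spaces carrying the compact-open topology, as
subspaces of `C([0,1], ℝⁿ)`). -/
theorem stmt5 (n : ℕ) (k : Fin n → ℕ) (hk : ∀ i, 1 ≤ k i)
    (𝓕 : Finset (Finset (Fin n)))
    (hup : ∀ F ∈ 𝓕, ∀ F' : Finset (Fin n), F ⊆ F' → F' ∈ 𝓕)
    (hcard : ∀ F ∈ 𝓕, 2 ≤ F.card)
    (ι : C({p : C(I, Fin n → ℝ) // DiPathStrict n k 𝓕 p},
      {p : C(I, Fin n → ℝ) // DiPath n k 𝓕 p}))
    (hι : ∀ p, (ι p).1 = p.1) :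
    ∃ ρ : C({p : C(I, Fin n → ℝ) // DiPath n k 𝓕 p},
        {p : C(I, Fin n → ℝ) // DiPathStrict n k 𝓕 p}),
      (ι.comp ρ).Homotopic (ContinuousMap.id _) ∧
        (ρ.comp ι).Homotopic (ContinuousMap.id _) := by
  classical
  -- continuous choice of a good tilt
  obtain ⟨g, hg⟩ : ∃ g : C({p : C(I, Fin n → ℝ) // DiPath n k 𝓕 p}, ℝ),
      ∀ x, g x ∈ Stmt5Aux.TS k 𝓕 x.1 := by
    apply exists_continuous_forall_mem_convex_of_local_const
      (t := fun x : {p : C(I, Fin n → ℝ) // DiPath n k 𝓕 p} => Stmt5Aux.TS k 𝓕 x.1)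
      (fun x => Stmt5Aux.convex_TS k 𝓕 x.1)
    intro x
    obtain ⟨c, r, hr, hc⟩ := Stmt5Aux.local_good k 𝓕 hcard x.1 x.2
    refine ⟨c, ?_⟩
    filter_upwards [Metric.ball_mem_nhds x hr] with y hy
    refine hc y.1 ?_ y.2
    rw [Metric.mem_ball, Subtype.dist_eq] at hy
    exact hy
  -- the retraction
  have hcρ : Continuous (fun q : {p : C(I, Fin n → ℝ) // DiPath n k 𝓕 p} × I =>
      Stmt5Aux.mixFun k ((q.1.1, g q.1), q.2)) := by
    apply (Stmt5Aux.continuous_mixFun k).comp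
    exact ((continuous_subtype_val.comp continuous_fst).prodMk
      (g.continuous.comp continuous_fst)).prodMk continuous_snd
  let ρ₀ : C({p : C(I, Fin n → ℝ) // DiPath n k 𝓕 p}, C(I, Fin n → ℝ)) :=
    ContinuousMap.curry ⟨_, hcρ⟩
  have hρ₀ : ∀ p, ρ₀ p = Stmt5Aux.mix k p.1 (g p) := fun p => by ext t; rfl
  have hstrict : ∀ p, DiPathStrict n k 𝓕 (ρ₀ p) := by
    intro p
    rw [hρ₀ p]
    exact Stmt5Aux.diPathStrict_mix_pos k 𝓕 p.2 (hg p).1 le_rfl (hg p)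
  let ρ : C({p : C(I, Fin n → ℝ) // DiPath n k 𝓕 p},
      {p : C(I, Fin n → ℝ) // DiPathStrict n k 𝓕 p}) :=
    ⟨fun p => ⟨ρ₀ p, hstrict p⟩, ρ₀.continuous.subtype_mk hstrict⟩
  refine ⟨ρ, ?_, ?_⟩
  · -- ι ∘ ρ ≃ id
    have hcH : Continuous (fun q : (I × {p : C(I, Fin n → ℝ) // DiPath n k 𝓕 p}) × I =>
        Stmt5Aux.mixFun k ((q.1.2.1, (1 - (q.1.1 : ℝ)) * g q.1.2), q.2)) := by
      apply (Stmt5Aux.continuous_mixFun k).comp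
      refine Continuous.prodMk (Continuous.prodMk ?_ ?_) continuous_snd
      · exact continuous_subtype_val.comp (continuous_snd.comp continuous_fst)
      · exact ((continuous_const.sub
          (continuous_subtype_val.comp (continuous_fst.comp continuous_fst))).mul
          (g.continuous.comp (continuous_snd.comp continuous_fst)))
    let GH : C(I × {p : C(I, Fin n → ℝ) // DiPath n k 𝓕 p}, C(I, Fin n → ℝ)) :=
      ContinuousMap.curry ⟨_, hcH⟩
    have hGH : ∀ sg x, GH (sg, x) = Stmt5Aux.mix k x.1 ((1 - (sg : ℝ)) * g x) :=
      fun sg x => by ext t; rfl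
    have hpf : ∀ q : I × {p : C(I, Fin n → ℝ) // DiPath n k 𝓕 p}, DiPath n k 𝓕 (GH q) := by
      rintro ⟨sg, x⟩
      rw [hGH]
      have h1 : 0 ≤ (1 - (sg : ℝ)) := by linarith [sg.2.2]
      have h2 : (1 - (sg : ℝ)) * g x ≤ g x :=
        mul_le_of_le_one_left (hg x).1.le (by linarith [sg.2.1])
      exact Stmt5Aux.diPath_mix k 𝓕 x.2 (mul_nonneg h1 (hg x).1.le) h2 (hg x)
    refine ⟨{ toContinuousMap := ⟨fun q => ⟨GH q, hpf q⟩,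
                GH.continuous.subtype_mk hpf⟩,
              map_zero_left := ?_, map_one_left := ?_ }⟩
    · intro x
      apply Subtype.ext
      show GH (0, x) = ((ι.comp ρ) x).1
      rw [ContinuousMap.comp_apply, hι, hGH]
      show _ = ρ₀ x
      rw [hρ₀]
      have hv : (1 - ((0 : I) : ℝ)) * g x = g x := by
        norm_num [show ((0 : I) : ℝ) = 0 from rfl]
      rw [hv]
    · intro x
      apply Subtype.ext
      show GH (1, x) = x.1
      rw [hGH]
      have hv : (1 - ((1 : I) : ℝ)) * g x = 0 := by
        norm_num [show ((1 : I) : ℝ) = 1 from rfl]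
      rw [hv, Stmt5Aux.mix_eq_self k x.1 le_rfl]
  · -- ρ ∘ ι ≃ id
    have hcH : Continuous (fun q : (I × {p : C(I, Fin n → ℝ) // DiPathStrict n k 𝓕 p}) × I =>
        Stmt5Aux.mixFun k ((q.1.2.1, (1 - (q.1.1 : ℝ)) * g (ι q.1.2)), q.2)) := by
      apply (Stmt5Aux.continuous_mixFun k).comp
      refine Continuous.prodMk (Continuous.prodMk ?_ ?_) continuous_snd
      · exact continuous_subtype_val.comp (continuous_snd.comp continuous_fst)
      · exact ((continuous_const.sub
          (continuous_subtype_val.comp (continuous_fst.comp continuous_fst))).mul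
          ((g.continuous.comp ι.continuous).comp (continuous_snd.comp continuous_fst)))
    let GH : C(I × {p : C(I, Fin n → ℝ) // DiPathStrict n k 𝓕 p}, C(I, Fin n → ℝ)) :=
      ContinuousMap.curry ⟨_, hcH⟩
    have hGH : ∀ sg x, GH (sg, x) = Stmt5Aux.mix k x.1 ((1 - (sg : ℝ)) * g (ι x)) :=
      fun sg x => by ext t; rfl
    have hTS : ∀ x : {p : C(I, Fin n → ℝ) // DiPathStrict n k 𝓕 p},
        g (ι x) ∈ Stmt5Aux.TS k 𝓕 x.1 := by
      intro x
      have := hg (ι x)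
      rwa [hι] at this
    have hpf : ∀ q : I × {p : C(I, Fin n → ℝ) // DiPathStrict n k 𝓕 p},
        DiPathStrict n k 𝓕 (GH q) := by
      rintro ⟨sg, x⟩
      rw [hGH]
      have h1 : 0 ≤ (1 - (sg : ℝ)) := by linarith [sg.2.2]
      have h2 : (1 - (sg : ℝ)) * g (ι x) ≤ g (ι x) :=
        mul_le_of_le_one_left (hTS x).1.le (by linarith [sg.2.1])
      exact Stmt5Aux.diPathStrict_mix_of_strict k 𝓕 x.2
        (mul_nonneg h1 (hTS x).1.le) h2 (hTS x)
    refine ⟨{ toContinuousMap := ⟨fun q => ⟨GH q, hpf q⟩,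
                GH.continuous.subtype_mk hpf⟩,
              map_zero_left := ?_, map_one_left := ?_ }⟩
    · intro x
      apply Subtype.ext
      show GH (0, x) = ((ρ.comp ι) x).1
      rw [ContinuousMap.comp_apply, hGH]
      show _ = ρ₀ (ι x)
      rw [hρ₀, hι]
      have hv : (1 - ((0 : I) : ℝ)) * g (ι x) = g (ι x) := by
        norm_num [show ((0 : I) : ℝ) = 0 from rfl]
      rw [hv]
    · intro x
      apply Subtype.ext
      show GH (1, x) = x.1
      rw [hGH]
      have hv : (1 - ((1 : I) : ℝ)) * g (ι x) = 0 := by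
        norm_num [show ((1 : I) : ℝ) = 1 from rfl]
      rw [hv, Stmt5Aux.mix_eq_self k x.1 le_rfl]
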